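/- Let k ≥ 1 be an integer and c > 1 a non-integer, and suppose hypothesis (PSWG) holds with constant 0 < P*(c,k) ≤ 1/(ck). Let ω be a real number. Then: (i) there is a constant C such that uniformly for α ∈ [0,1) and all x ≥ 2, | ∑_{n≤x} n^{ω−1/(ck)} 1_{P_(c)^k}(n) (log n) e(nα) − (1/c) ∑_{n≤x} n^{ω−1/k} 1_{P^k}(n) (log n) e(nα) | ≤ C·x^{max{ω − P*(c,k), 0}}·log x; and (ii) for every C₀ ≥ 1 there is a constant C' (depending on C₀) such that uniformly for α ∈ [0,1) and all x ≥ 2, | ∑_{x/C₀ ≤ n ≤ x} n^{ω−1/(ck)} 1_{P_(c)^k}(n) (log n) e(nα) − (1/c) ∑_{x/C₀ ≤ n ≤ x} n^{ω−1/k} 1_{P^k}(n) (log n) e(nα) | ≤ C'·x^{ω − P*(c,k)}. -/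

import Mathlib

open MeasureTheory Filter Finset Set

noncomputable section

/-- `e(α) = exp(2πiα)`. -/
def eR (α : ℝ) : ℂ := Complex.exp (2 * Real.pi * Complex.I * α)

/-- The Piatetski-Shapiro set `N_(c) = {⌊n^c⌋ : n ∈ ℕ, n ≥ 1}`. -/
def NPS (c : ℝ) : Set ℕ := {m | ∃ n : ℕ, 1 ≤ n ∧ m = ⌊(n : ℝ) ^ c⌋₊}

/-- `H₀(c)` for non-integral real `c > 1`. -/
def H0c (c : ℝ) : ℝ :=
  if c < 2 then 2 else ((⌊2 * c⌋ : ℝ) + 1) * ((⌊2 * c⌋ : ℝ) + 2) / 2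

/-- `H₀(k)` for a positive integer `k`. -/
def H0k (k : ℕ) : ℕ :=
  if k ≤ 4 then 2 ^ (k - 1) else k * (k - 1) / 2 + Nat.sqrt (2 * k + 2)

/-- `k`-th powers of positive integers. -/
def Npow (k : ℕ) : Set ℕ := {m | ∃ n : ℕ, 1 ≤ n ∧ m = n ^ k}

/-- `k`-th powers of Piatetski-Shapiro numbers. -/
def NPSpow (c : ℝ) (k : ℕ) : Set ℕ := {m | ∃ n ∈ NPS c, m = n ^ k}

/-- `k`-th powers of primes. -/
def Ppow (k : ℕ) : Set ℕ := {m | ∃ p : ℕ, p.Prime ∧ m = p ^ k}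

/-- `k`-th powers of Piatetski-Shapiro primes. -/
def PPSpow (c : ℝ) (k : ℕ) : Set ℕ := {m | ∃ p ∈ NPS c, p.Prime ∧ m = p ^ k}

/-- The representation function `r_{A,h}(n)`: the number of ordered `h`-tuples
from `A` summing to `n`. -/
def rep (A : Set ℕ) (h n : ℕ) : ℕ :=
  Nat.card {x : Fin h → ℕ // (∀ i, x i ∈ A) ∧ ∑ i, x i = n}

open scoped Classical in
/-- The finite set of ordered `h`-tuples of elements of `A` summing to `N`. -/
def tuples (A : Set ℕ) (h N : ℕ) : Finset (Fin h → ℕ) :=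
  (Fintype.piFinset fun _ : Fin h => Finset.range (N + 1)).filter
    (fun x => (∀ i, x i ∈ A) ∧ ∑ i, x i = N)

/-- Weighted exponential sum `∑_{1 ≤ n ≤ x, n ∈ A} w(n) e(nα)`. -/
def expSum (A : Set ℕ) (w : ℕ → ℝ) (α x : ℝ) : ℂ :=
  ∑ n ∈ Finset.Icc 1 ⌊x⌋₊, ((Set.indicator A w n : ℝ) : ℂ) * eR (n * α)

/-- Weighted exponential sum `∑_{y ≤ n ≤ x, n ∈ A} w(n) e(nα)`. -/
def expSumI (A : Set ℕ) (w : ℕ → ℝ) (α y x : ℝ) : ℂ :=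
  ∑ n ∈ Finset.Icc ⌈y⌉₊ ⌊x⌋₊, ((Set.indicator A w n : ℝ) : ℂ) * eR (n * α)

/-- Distance to the nearest integer. -/
def distInt (α : ℝ) : ℝ := |α - (round α : ℝ)|

/-- The major arc `𝔐 = {α ∈ [0,1] : ‖α‖ ≤ N^ν / N}`. -/
def MajorArc (ν : ℝ) (N : ℕ) : Set ℝ :=
  {α ∈ Set.Icc (0:ℝ) 1 | distInt α ≤ (N : ℝ) ^ ν / N}

/-- The minor arc `𝔪 = [0,1] ∖ 𝔐`. -/
def MinorArc (ν : ℝ) (N : ℕ) : Set ℝ := Set.Icc (0:ℝ) 1 \ MajorArc ν N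

/-- `T(α;x) = ∑_{n≤x} n^{ω-1/c} 1_{N_(c)}(n) e(nα)`. -/
def Tc (c ω : ℝ) (α x : ℝ) : ℂ := expSum (NPS c) (fun n => (n : ℝ) ^ (ω - 1 / c)) α x

/-- `T^♯(α;x) = ∑_{x/h≤n≤x} n^{ω-1/c} 1_{N_(c)}(n) e(nα)`. -/
def TcSharp (c ω : ℝ) (h : ℕ) (α x : ℝ) : ℂ :=
  expSumI (NPS c) (fun n => (n : ℝ) ^ (ω - 1 / c)) α (x / h) x

/-- `U(α;x) = ∑_{n≤x} n^{ω-1} e(nα)`. -/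
def Uc (ω : ℝ) (α x : ℝ) : ℂ :=
  ∑ n ∈ Finset.Icc 1 ⌊x⌋₊, (((n : ℝ) ^ (ω - 1) : ℝ) : ℂ) * eR (n * α)

/-- `U^♯(α;x) = ∑_{x/h≤n≤x} n^{ω-1} e(nα)`. -/
def UcSharp (ω : ℝ) (h : ℕ) (α x : ℝ) : ℂ :=
  ∑ n ∈ Finset.Icc ⌈x / h⌉₊ ⌊x⌋₊, (((n : ℝ) ^ (ω - 1) : ℝ) : ℂ) * eR (n * α)

/-- The complete Gauss-type sum `S(a,q) = ∑_{r=1}^q e(a r^k / q)`. -/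
def Swar (k a q : ℕ) : ℂ := ∑ r ∈ Finset.Icc 1 q, eR (((a * r ^ k : ℕ) : ℝ) / q)

/-- The singular series of Waring's problem. -/
def SingSer (k h n : ℕ) : ℝ :=
  (∑' q : ℕ, ∑ a ∈ (Finset.Icc 1 q).filter (fun a => Nat.gcd a q = 1),
      (Swar k a q / (q : ℂ)) ^ h * eR (-(((n * a : ℕ) : ℝ) / q))).re

/-- The restricted Gauss-type sum `S*(q,a) = ∑_{1≤r≤q, (r,q)=1} e(a r^k / q)`. -/
def SwarStar (k a q : ℕ) : ℂ :=
  ∑ r ∈ (Finset.Icc 1 q).filter (fun r => Nat.gcd r q = 1), eR (((a * r ^ k : ℕ) : ℝ) / q)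

/-- The singular series of the Waring–Goldbach problem. -/
def SingSerStar (k h n : ℕ) : ℝ :=
  (∑' q : ℕ, ∑ a ∈ (Finset.Icc 1 q).filter (fun a => Nat.gcd a q = 1),
      (SwarStar k a q / (Nat.totient q : ℂ)) ^ h * eR (-(((n * a : ℕ) : ℝ) / q))).re

/-- `K(k) = ∏_{(p-1) ∣ k} p^{ν(k,p)}`. -/
def Kk (k : ℕ) : ℕ :=
  ∏ p ∈ (Finset.range (k + 2)).filter (fun p => p.Prime ∧ (p - 1) ∣ k),
    p ^ (k.factorization p + if p = 2 ∧ 2 ∣ k then 2 else 1)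

/-- A measurable positive function is regularly varying if `F(λx)/F(x)` converges
to a positive limit for every `λ > 0`. -/
def RegularlyVarying (F : ℝ → ℝ) : Prop :=
  Measurable F ∧ ∀ l : ℝ, 0 < l → ∃ L : ℝ, 0 < L ∧
    Filter.Tendsto (fun x => F (l * x) / F x) Filter.atTop (nhds L)

/-- Hypothesis (PSW). -/
def PSW (c : ℝ) (k : ℕ) (P : ℝ) : Prop :=
  ∃ C : ℝ, ∀ α ∈ Set.Ico (0:ℝ) 1, ∀ x : ℝ, 2 ≤ x →
    Norm.norm (expSum (NPSpow c k) (fun _ => 1) α x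
      - (1 / c) * expSum (Npow k) (fun n => (n : ℝ) ^ ((1 / c - 1) / k)) α x)
      ≤ C * x ^ (1 / (c * k) - P)

/-- Hypothesis (PSWG). -/
def PSWG (c : ℝ) (k : ℕ) (P : ℝ) : Prop :=
  ∃ C : ℝ, ∀ α ∈ Set.Ico (0:ℝ) 1, ∀ x : ℝ, 2 ≤ x →
    Norm.norm (expSum (PPSpow c k) (fun n => Real.log n) α x
      - (1 / c) * expSum (Ppow k) (fun n => (n : ℝ) ^ ((1 / c - 1) / k) * Real.log n) α x)
      ≤ C * x ^ (1 / (c * k) - P)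

/-! ### Auxiliary lemmas for stmt17 -/

lemma aux_harmonic17 (M : ℕ) :
    ∑ i ∈ Finset.range M, (1:ℝ)/(i+1) ≤ 1 + Real.log (M+1) := by
  cases M with
  | zero => simp
  | succ m =>
    rw [Finset.sum_range_succ']
    have key : ∑ i ∈ Finset.range m, (1:ℝ)/(↑(i+1)+1) ≤ Real.log (m+1) := by
      have hle : ∑ i ∈ Finset.range m, (1:ℝ)/(↑(i+1)+1)
          ≤ ∑ i ∈ Finset.range m, (Real.log ((i:ℝ)+1+1) - Real.log ((i:ℝ)+1)) := by
        apply Finset.sum_le_sum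
        intro i _
        have hpos : (0:ℝ) < ((i:ℝ)+1)/((i:ℝ)+1+1) := by positivity
        have hlog := Real.log_le_sub_one_of_pos hpos
        rw [Real.log_div (by positivity) (by positivity)] at hlog
        have heq : ((i:ℝ)+1)/((i:ℝ)+1+1) - 1 = -(1/((i:ℝ)+1+1)) := by field_simp; ring
        rw [heq] at hlog
        push_cast
        linarith
      have htel' : ∑ i ∈ Finset.range m, (Real.log ((i:ℝ)+1+1) - Real.log ((i:ℝ)+1))
          = Real.log ((m:ℝ)+1) - Real.log ((0:ℝ)+1) := by
        have := Finset.sum_range_sub (fun i => Real.log ((i:ℝ)+1)) m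
        simpa [add_assoc] using this
      rw [htel'] at hle
      simpa using hle
    have hlogle : Real.log ((m:ℝ)+1) ≤ Real.log ((m:ℝ)+1+1) :=
      Real.log_le_log (by positivity) (by linarith)
    push_cast
    push_cast at key
    linarith

lemma aux_step17 (s : ℝ) (i : ℕ) (hi : 1 ≤ i) :
    |((i:ℝ)+1) ^ s - (i:ℝ) ^ s| ≤ ((|s|+1) * 2 ^ |s-1|) * (i:ℝ) ^ (s-1) := by
  have hi1 : (1:ℝ) ≤ (i:ℝ) := by exact_mod_cast hi
  have hipos : (0:ℝ) < i := by linarith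
  obtain ⟨t, ht, hteq⟩ := exists_hasDerivAt_eq_slope (fun u => u ^ s)
      (fun u => s * u ^ (s-1)) (by linarith : (i:ℝ) < (i:ℝ)+1)
      (fun u hu => (Real.hasDerivAt_rpow_const
        (Or.inl (by rcases hu with ⟨h1, h2⟩; nlinarith))).continuousAt.continuousWithinAt)
      (fun u hu => Real.hasDerivAt_rpow_const
        (Or.inl (by rcases hu with ⟨h1, h2⟩; nlinarith)))
  rw [show ((i:ℝ)+1 - (i:ℝ)) = 1 by ring, div_one] at hteq
  have htpos : (0:ℝ) < t := by rcases ht with ⟨h1, h2⟩; linarith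
  have h2abs : (1:ℝ) ≤ (2:ℝ) ^ |s-1| := Real.one_le_rpow one_le_two (abs_nonneg _)
  have hip : (0:ℝ) ≤ (i:ℝ) ^ (s-1) := Real.rpow_nonneg hipos.le _
  have hb : t ^ (s-1) ≤ 2 ^ |s-1| * (i:ℝ) ^ (s-1) := by
    rcases le_or_gt 0 (s-1) with h | h
    · calc t^(s-1) ≤ (2*(i:ℝ))^(s-1) :=
            Real.rpow_le_rpow htpos.le (by rcases ht with ⟨h1,h2⟩; linarith) h
        _ = 2^(s-1) * (i:ℝ)^(s-1) := Real.mul_rpow (by norm_num) hipos.le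
        _ ≤ 2^|s-1| * (i:ℝ)^(s-1) := by
            have := Real.rpow_le_rpow_of_exponent_le one_le_two (le_abs_self (s-1))
            exact mul_le_mul_of_nonneg_right this hip
    · calc t^(s-1) ≤ (i:ℝ)^(s-1) := Real.rpow_le_rpow_of_nonpos hipos ht.1.le h.le
        _ ≤ 2^|s-1| * (i:ℝ)^(s-1) := by nlinarith
  rw [← hteq, abs_mul, abs_of_nonneg (Real.rpow_nonneg htpos.le _)]
  calc |s| * t^(s-1) ≤ |s| * (2^|s-1| * (i:ℝ)^(s-1)) :=
        mul_le_mul_of_nonneg_left hb (abs_nonneg s)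
    _ ≤ (|s|+1) * (2^|s-1| * (i:ℝ)^(s-1)) :=
        mul_le_mul_of_nonneg_right (by linarith) (mul_nonneg (by positivity) hip)
    _ = ((|s|+1) * 2^|s-1|) * (i:ℝ)^(s-1) := by ring

lemma aux_base17 (b x t s : ℝ) (hb : 1 ≤ b) (hx : 0 < x) (ht1 : x / b ≤ t) (ht2 : t ≤ x) :
    t ^ s ≤ b ^ |s| * x ^ s := by
  have hb0 : (0:ℝ) < b := lt_of_lt_of_le one_pos hb
  have htpos : 0 < t := lt_of_lt_of_le (div_pos hx hb0) ht1
  rcases le_or_gt 0 s with h | h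
  · have h1 : t ^ s ≤ x ^ s := Real.rpow_le_rpow htpos.le ht2 h
    have h2 : (1:ℝ) ≤ b ^ |s| := Real.one_le_rpow hb (abs_nonneg s)
    nlinarith [Real.rpow_nonneg hx.le s]
  · have h1 : t ^ s ≤ (x / b) ^ s := Real.rpow_le_rpow_of_nonpos (div_pos hx hb0) ht1 h.le
    have h2 : (x / b) ^ s = b ^ |s| * x ^ s := by
      rw [abs_of_neg h, Real.div_rpow hx.le hb0.le, Real.rpow_neg hb0.le]
      ring
    rw [h2] at h1
    exact h1

/-- The summand of the PSWG difference. -/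
def dd17 (c : ℝ) (k : ℕ) (α : ℝ) (n : ℕ) : ℂ :=
  ((Set.indicator (PPSpow c k) (fun n => Real.log n) n : ℝ) : ℂ) * eR (n * α)
    - (1 / (c:ℂ)) * (((Set.indicator (Ppow k)
        (fun n => (n : ℝ) ^ ((1 / c - 1) / k) * Real.log n) n : ℝ) : ℂ) * eR (n * α))

lemma dd17_small (c : ℝ) (k : ℕ) (α : ℝ) (n : ℕ) (hn : n ≤ 1) : dd17 c k α n = 0 := by
  have h1 : Real.log (n:ℝ) = 0 := by interval_cases n <;> simp
  have hA : (PPSpow c k).indicator (fun n : ℕ => Real.log ↑n) n = 0 :=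
    Set.indicator_apply_eq_zero.mpr (fun _ => h1)
  have hB : (Ppow k).indicator (fun n : ℕ => (n:ℝ) ^ ((1 / c - 1) / k) * Real.log ↑n) n = 0 :=
    Set.indicator_apply_eq_zero.mpr (fun _ => by rw [h1]; ring)
  unfold dd17
  rw [hA, hB]
  simp

lemma dd17_sum (c : ℝ) (k : ℕ) (α : ℝ) (m : ℕ) :
    expSum (PPSpow c k) (fun n => Real.log n) α m
      - (1 / (c:ℂ)) * expSum (Ppow k) (fun n => (n : ℝ) ^ ((1 / c - 1) / k) * Real.log n) α m
      = ∑ n ∈ Finset.range (m+1), dd17 c k α n := by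
  unfold expSum
  rw [Nat.floor_natCast, Finset.mul_sum, ← Finset.sum_sub_distrib,
    Finset.range_eq_Ico, Finset.sum_eq_sum_Ico_succ_bot (Nat.succ_pos m),
    dd17_small c k α 0 (by norm_num), zero_add, Nat.succ_eq_add_one, Finset.Ico_add_one_right_eq_Icc]
  rfl

lemma target_eq17 (c : ℝ) (hc0 : c ≠ 0) (k : ℕ) (hk : 1 ≤ k) (ω α : ℝ) (M N : ℕ) (hM : 1 ≤ M) :
    (∑ n ∈ Finset.Icc M N,
        ((Set.indicator (PPSpow c k) (fun n => (n:ℝ) ^ (ω - 1/(c*k)) * Real.log n) n : ℝ) : ℂ)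
          * eR (n * α))
      - (1 / (c:ℂ)) * ∑ n ∈ Finset.Icc M N,
        ((Set.indicator (Ppow k) (fun n => (n:ℝ) ^ (ω - 1/k) * Real.log n) n : ℝ) : ℂ)
          * eR (n * α)
    = ∑ n ∈ Finset.Icc M N, ((((n:ℝ) ^ (ω - 1/(c*k)) : ℝ)) : ℂ) * dd17 c k α n := by
  rw [Finset.mul_sum, ← Finset.sum_sub_distrib]
  apply Finset.sum_congr rfl
  intro n hn
  have hn1 : 1 ≤ n := le_trans hM (Finset.mem_Icc.mp hn).1
  have hnpos : (0:ℝ) < n := by exact_mod_cast Nat.lt_of_lt_of_le Nat.zero_lt_one hn1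
  have hk0 : (k:ℝ) ≠ 0 := Nat.cast_ne_zero.mpr (by omega)
  have e1 : Set.indicator (PPSpow c k) (fun m => (m:ℝ) ^ (ω - 1/(c*k)) * Real.log m) n
      = (n:ℝ) ^ (ω - 1/(c*k)) * Set.indicator (PPSpow c k) (fun m => Real.log m) n := by
    classical
    by_cases h : n ∈ PPSpow c k <;> simp [h]
  have hsplit : (n:ℝ) ^ (ω - 1/(k:ℝ)) = (n:ℝ) ^ (ω - 1/(c*k)) * (n:ℝ) ^ ((1/c-1)/k) := by
    rw [← Real.rpow_add hnpos]
    congr 1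
    field_simp
    ring
  have e2 : Set.indicator (Ppow k) (fun m => (m:ℝ) ^ (ω - 1/k) * Real.log m) n
      = (n:ℝ) ^ (ω - 1/(c*k))
        * Set.indicator (Ppow k) (fun m => (m:ℝ) ^ ((1/c-1)/k) * Real.log m) n := by
    classical
    by_cases h : n ∈ Ppow k
    · rw [Set.indicator_of_mem h, Set.indicator_of_mem h, hsplit]; ring
    · rw [Set.indicator_of_notMem h, Set.indicator_of_notMem h]; ring
  rw [e1, e2]
  unfold dd17
  push_cast
  ring

set_option maxHeartbeats 2000000 in
/-- Weighted transfer estimates from `P_(c)^k` to `P^k`. -/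
theorem stmt17 (k : ℕ) (hk : 1 ≤ k) (c : ℝ) (hc1 : 1 < c) (hcni : ∀ m : ℤ, c ≠ (m : ℝ))
    (P : ℝ) (hP0 : 0 < P) (hP1 : P ≤ 1 / (c * k)) (hPSWG : PSWG c k P)
    (ω : ℝ) :
    (∃ C > (0:ℝ), ∀ α ∈ Set.Ico (0:ℝ) 1, ∀ x : ℝ, 2 ≤ x →
      Norm.norm
        (expSum (PPSpow c k) (fun n => (n : ℝ) ^ (ω - 1 / (c * k)) * Real.log n) α x
          - (1 / c) * expSum (Ppow k) (fun n => (n : ℝ) ^ (ω - 1 / k) * Real.log n) α x)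
        ≤ C * x ^ (max (ω - P) 0) * Real.log x) ∧
    (∀ C₀ : ℝ, 1 ≤ C₀ → ∃ C' > (0:ℝ), ∀ α ∈ Set.Ico (0:ℝ) 1, ∀ x : ℝ, 2 ≤ x →
      Norm.norm
        (expSumI (PPSpow c k)
            (fun n => (n : ℝ) ^ (ω - 1 / (c * k)) * Real.log n) α (x / C₀) x
          - (1 / c) * expSumI (Ppow k)
              (fun n => (n : ℝ) ^ (ω - 1 / k) * Real.log n) α (x / C₀) x)
        ≤ C' * x ^ (ω - P)) := by
    classical
  have hc0 : (0:ℝ) < c := lt_trans one_pos hc1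
  have hcne : c ≠ 0 := ne_of_gt hc0
  obtain ⟨C, hC⟩ := hPSWG
  set s : ℝ := ω - 1/(c*k) with hs_def
  set q : ℝ := 1/(c*k) - P with hq_def
  have hq : 0 ≤ q := by rw [hq_def]; linarith
  set C₁ : ℝ := max C 1 with hC₁_def
  have hC₁1 : (1:ℝ) ≤ C₁ := le_max_right _ _
  have hC₁0 : (0:ℝ) ≤ C₁ := by linarith
  set K : ℝ := (|s|+1) * 2 ^ |s-1| with hK_def
  have hK0 : 0 < K := by rw [hK_def]; positivity
  have h2q : (0:ℝ) < 2^q := Real.rpow_pos_of_pos two_pos q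
  have hse : s + q = ω - P := by rw [hs_def, hq_def]; ring
  -- bound on the partial sums of dd17
  have hD : ∀ α ∈ Set.Ico (0:ℝ) 1, ∀ t : ℕ,
      Norm.norm (∑ n ∈ Finset.range t, dd17 c k α n) ≤ C₁ * (t:ℝ) ^ q := by
    intro α hα t
    rcases le_or_gt t 2 with ht | ht
    · have hz : ∑ n ∈ Finset.range t, dd17 c k α n = 0 :=
        Finset.sum_eq_zero (fun n hn => dd17_small c k α n (by
          have := Finset.mem_range.mp hn; omega))
      rw [hz]
      simpa using mul_nonneg hC₁0 (Real.rpow_nonneg (Nat.cast_nonneg t) q)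
    · obtain ⟨m, rfl⟩ : ∃ m, t = m + 1 := ⟨t - 1, by omega⟩
      have hm2 : (2:ℝ) ≤ (m:ℝ) := by exact_mod_cast (by omega : 2 ≤ m)
      have hbd := hC α hα (m:ℝ) hm2
      rw [dd17_sum c k α m] at hbd
      refine le_trans hbd ?_
      have h1 : (m:ℝ) ^ q ≤ ((m+1:ℕ):ℝ) ^ q :=
        Real.rpow_le_rpow (Nat.cast_nonneg m) (by push_cast; linarith) hq
      exact mul_le_mul (le_max_left C 1) h1 (Real.rpow_nonneg (Nat.cast_nonneg m) q) hC₁0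
  -- generic Abel-summation bound
  have habel : ∀ α : ℝ, ∀ M N : ℕ, 1 ≤ M → M ≤ N →
      Norm.norm (∑ n ∈ Finset.Icc M N, (((n:ℝ) ^ s : ℝ) : ℂ) * dd17 c k α n)
        ≤ ((N:ℝ)^s) * Norm.norm (∑ n ∈ Finset.range (N+1), dd17 c k α n)
          + ((M:ℝ)^s) * Norm.norm (∑ n ∈ Finset.range M, dd17 c k α n)
          + ∑ i ∈ Finset.Ico M N, |((i:ℝ)+1)^s - (i:ℝ)^s|
              * Norm.norm (∑ n ∈ Finset.range (i+1), dd17 c k α n) := by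
    intro α M N hM hMN
    have hre : ∀ r : ℝ, ‖(r:ℂ)‖ = |r| := fun r => by
      rw [Complex.norm_real, Real.norm_eq_abs]
    have hid := Finset.sum_Ico_by_parts (fun n : ℕ => (((n:ℝ) ^ s : ℝ) : ℂ)) (dd17 c k α)
        (Nat.lt_succ_of_le hMN)
    simp only [smul_eq_mul, Nat.add_sub_cancel, Nat.succ_sub_one, Nat.succ_eq_add_one] at hid
    rw [← Finset.Ico_add_one_right_eq_Icc, hid]
    have t12 : ‖((((N:ℝ)^s : ℝ)):ℂ) * ∑ n ∈ Finset.range (N+1), dd17 c k α n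
          - ((((M:ℝ)^s : ℝ)):ℂ) * ∑ n ∈ Finset.range M, dd17 c k α n‖
        ≤ ((N:ℝ)^s) * Norm.norm (∑ n ∈ Finset.range (N+1), dd17 c k α n)
          + ((M:ℝ)^s) * Norm.norm (∑ n ∈ Finset.range M, dd17 c k α n) := by
      refine le_trans (norm_sub_le _ _) ?_
      rw [norm_mul, norm_mul, hre, hre,
        abs_of_nonneg (Real.rpow_nonneg (Nat.cast_nonneg N) s),
        abs_of_nonneg (Real.rpow_nonneg (Nat.cast_nonneg M) s)]
    have t3 : ‖∑ i ∈ Finset.Ico M N,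
          ((((((i+1:ℕ):ℝ)^s : ℝ)):ℂ) - (((((i:ℝ)^s : ℝ)):ℂ))) * ∑ n ∈ Finset.range (i+1), dd17 c k α n‖
        ≤ ∑ i ∈ Finset.Ico M N, |((i:ℝ)+1)^s - (i:ℝ)^s|
            * Norm.norm (∑ n ∈ Finset.range (i+1), dd17 c k α n) := by
      refine le_trans (norm_sum_le _ _) (Finset.sum_le_sum ?_)
      intro i _
      rw [norm_mul, ← Complex.ofReal_sub, hre]
      have : ((((i+1:ℕ):ℝ))^s - ((i:ℝ))^s) = (((i:ℝ)+1)^s - (i:ℝ)^s) := by push_cast; ring_nf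
      rw [this]
    refine le_trans (norm_sub_le _ _) ?_
    exact add_le_add t12 t3
  constructor
  · -- part (i)
    have hL2 : 0 < Real.log 2 := Real.log_pos one_lt_two
    have hC₁p : (0:ℝ) < C₁ := lt_of_lt_of_le one_pos hC₁1
    refine ⟨C₁ * 2^q * (1/Real.log 2) + K * C₁ * 2^q * (1/Real.log 2 + 1), ?_, ?_⟩
    · have t1 : 0 < C₁ * 2^q * (1/Real.log 2) := by
        apply mul_pos (mul_pos hC₁p h2q); positivity
      have t2 : 0 < K * C₁ * 2^q * (1/Real.log 2 + 1) := by
        apply mul_pos (mul_pos (mul_pos hK0 hC₁p) h2q); positivity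
      linarith
    intro α hα x hx
    set N : ℕ := ⌊x⌋₊ with hN_def
    have hxpos : (0:ℝ) < x := by linarith
    have hx1 : (1:ℝ) ≤ x := by linarith
    have hN2 : 2 ≤ N := Nat.le_floor (by exact_mod_cast hx)
    have hN1R : (1:ℝ) ≤ (N:ℝ) := by exact_mod_cast le_trans (by norm_num) hN2
    have hNpos : (0:ℝ) < (N:ℝ) := by linarith
    have hNx : (N:ℝ) ≤ x := Nat.floor_le (by linarith)
    have hX1 : (1:ℝ) ≤ x ^ (max (ω-P) 0) := Real.one_le_rpow hx1 (le_max_right _ _)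
    have hX0 : (0:ℝ) ≤ x ^ (max (ω-P) 0) := by linarith
    have hlogx : Real.log 2 ≤ Real.log x := Real.log_le_log two_pos hx
    have hlogpos : 0 < Real.log x := lt_of_lt_of_le hL2 hlogx
    have hrw : expSum (PPSpow c k) (fun n => (n:ℝ) ^ s * Real.log n) α x
        - (1/(c:ℂ)) * expSum (Ppow k) (fun n => (n:ℝ) ^ (ω - 1/k) * Real.log n) α x
        = ∑ n ∈ Finset.Icc 1 N, (((n:ℝ)^s : ℝ):ℂ) * dd17 c k α n := by
      unfold expSum
      rw [hs_def]
      exact target_eq17 c hcne k hk ω α 1 ⌊x⌋₊ le_rfl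
    rw [hrw]
    have key := habel α 1 N le_rfl (by omega)
    -- middle term is zero
    have hS1 : ∑ n ∈ Finset.range 1, dd17 c k α n = 0 := by
      simp [dd17_small c k α 0 (by norm_num)]
    rw [hS1] at key
    simp only [map_zero, norm_zero, mul_zero, add_zero] at key
    -- first term
    have hSq : ∀ i : ℕ, 1 ≤ i → Norm.norm (∑ n ∈ Finset.range (i+1), dd17 c k α n)
        ≤ C₁ * (2^q * (i:ℝ)^q) := by
      intro i hi1
      have hi1R : (1:ℝ) ≤ (i:ℝ) := by exact_mod_cast hi1
      refine le_trans (hD α hα (i+1)) ?_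
      have h2 : ((i+1:ℕ):ℝ)^q ≤ 2^q * (i:ℝ)^q := by
        calc ((i+1:ℕ):ℝ)^q ≤ (2*(i:ℝ))^q :=
              Real.rpow_le_rpow (by positivity) (by push_cast; linarith) hq
          _ = 2^q * (i:ℝ)^q := Real.mul_rpow (by norm_num) (by positivity)
      exact mul_le_mul_of_nonneg_left h2 hC₁0
    have t1 : (N:ℝ)^s * Norm.norm (∑ n ∈ Finset.range (N+1), dd17 c k α n)
        ≤ C₁ * 2^q * x ^ (max (ω-P) 0) := by
      have h3 : (N:ℝ)^s * (N:ℝ)^q ≤ x ^ (max (ω-P) 0) := by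
        rw [← Real.rpow_add hNpos, hse]
        calc (N:ℝ)^(ω-P) ≤ (N:ℝ)^(max (ω-P) 0) :=
              Real.rpow_le_rpow_of_exponent_le hN1R (le_max_left _ _)
          _ ≤ x^(max (ω-P) 0) := Real.rpow_le_rpow (by positivity) hNx (le_max_right _ _)
      calc (N:ℝ)^s * Norm.norm (∑ n ∈ Finset.range (N+1), dd17 c k α n)
          ≤ (N:ℝ)^s * (C₁ * (2^q * (N:ℝ)^q)) :=
            mul_le_mul_of_nonneg_left (hSq N (by omega)) (Real.rpow_nonneg hNpos.le s)
        _ = C₁ * 2^q * ((N:ℝ)^s * (N:ℝ)^q) := by ring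
        _ ≤ C₁ * 2^q * x ^ (max (ω-P) 0) :=
            mul_le_mul_of_nonneg_left h3 (by positivity)
    -- the summed terms
    have hterm : ∀ i ∈ Finset.Ico 1 N, |((i:ℝ)+1)^s - (i:ℝ)^s|
          * Norm.norm (∑ n ∈ Finset.range (i+1), dd17 c k α n)
        ≤ K * C₁ * 2^q * x ^ (max (ω-P) 0) * (1/(i:ℝ)) := by
      intro i hi
      obtain ⟨hi1, hiN⟩ := Finset.mem_Ico.mp hi
      have hi1R : (1:ℝ) ≤ (i:ℝ) := by exact_mod_cast hi1
      have hipos : (0:ℝ) < (i:ℝ) := by linarith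
      have hix : (i:ℝ) ≤ x := le_trans (by exact_mod_cast Nat.le_of_lt hiN) hNx
      have h4 : (i:ℝ)^(s-1) * (i:ℝ)^q ≤ x ^ (max (ω-P) 0) * (1/(i:ℝ)) := by
        rw [← Real.rpow_add hipos]
        have e2 : s - 1 + q = (ω - P) - 1 := by rw [hs_def, hq_def]; ring
        rw [e2]
        rcases le_or_gt 0 (ω - P) with h | h
        · have hie : (i:ℝ)^(ω-P) ≤ x^(max (ω-P) 0) := by
            calc (i:ℝ)^(ω-P) ≤ x^(ω-P) := Real.rpow_le_rpow hipos.le hix h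
              _ ≤ x^(max (ω-P) 0) := Real.rpow_le_rpow_of_exponent_le hx1 (le_max_left _ _)
          rw [Real.rpow_sub hipos, Real.rpow_one]
          rw [div_le_iff₀ hipos]
          calc (i:ℝ)^(ω-P) ≤ x^(max (ω-P) 0) := hie
            _ = x^(max (ω-P) 0) * (1/(i:ℝ)) * (i:ℝ) := by field_simp
        · have h5 : (i:ℝ)^(ω-P-1) ≤ (i:ℝ)^(-1:ℝ) :=
            Real.rpow_le_rpow_of_exponent_le hi1R (by linarith)
          rw [Real.rpow_neg_one] at h5
          have h6 : (i:ℝ)⁻¹ ≤ x ^ (max (ω-P) 0) * (1/(i:ℝ)) := by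
            rw [one_div]
            nlinarith [inv_nonneg.mpr hipos.le]
          linarith
      have hstep := aux_step17 s i hi1
      have hSi := hSq i hi1
      calc |((i:ℝ)+1)^s - (i:ℝ)^s| * Norm.norm (∑ n ∈ Finset.range (i+1), dd17 c k α n)
          ≤ (K * (i:ℝ)^(s-1)) * (C₁ * (2^q * (i:ℝ)^q)) := by
            rw [hK_def]
            exact mul_le_mul hstep hSi (norm_nonneg _)
              (by rw [← hK_def]; positivity)
        _ = K * C₁ * 2^q * ((i:ℝ)^(s-1) * (i:ℝ)^q) := by ring
        _ ≤ K * C₁ * 2^q * (x ^ (max (ω-P) 0) * (1/(i:ℝ))) :=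
            mul_le_mul_of_nonneg_left h4 (by positivity)
        _ = K * C₁ * 2^q * x ^ (max (ω-P) 0) * (1/(i:ℝ)) := by ring
    have hsum : ∑ i ∈ Finset.Ico 1 N, (1/(i:ℝ)) ≤ 1 + Real.log x := by
      rw [Finset.sum_Ico_eq_sum_range]
      have hcg : ∀ j ∈ Finset.range (N-1), (1:ℝ)/((1+j:ℕ):ℝ) = 1/((j:ℝ)+1) := by
        intro j _; push_cast; rw [add_comm]
      rw [Finset.sum_congr rfl hcg]
      refine le_trans (aux_harmonic17 (N-1)) ?_
      have hcast : ((N-1:ℕ):ℝ) + 1 = (N:ℝ) := by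
        have h1 : (1:ℕ) ≤ N := by omega
        push_cast [Nat.cast_sub h1]
        ring
      rw [hcast]
      have := Real.log_le_log hNpos hNx
      linarith
    have t3 : ∑ i ∈ Finset.Ico 1 N, |((i:ℝ)+1)^s - (i:ℝ)^s|
          * Norm.norm (∑ n ∈ Finset.range (i+1), dd17 c k α n)
        ≤ K * C₁ * 2^q * x ^ (max (ω-P) 0) * (1 + Real.log x) := by
      calc ∑ i ∈ Finset.Ico 1 N, |((i:ℝ)+1)^s - (i:ℝ)^s|
            * Norm.norm (∑ n ∈ Finset.range (i+1), dd17 c k α n)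
          ≤ ∑ i ∈ Finset.Ico 1 N, K * C₁ * 2^q * x ^ (max (ω-P) 0) * (1/(i:ℝ)) :=
            Finset.sum_le_sum hterm
        _ = K * C₁ * 2^q * x ^ (max (ω-P) 0) * ∑ i ∈ Finset.Ico 1 N, (1/(i:ℝ)) := by
            rw [← Finset.mul_sum]
        _ ≤ K * C₁ * 2^q * x ^ (max (ω-P) 0) * (1 + Real.log x) := by
            apply mul_le_mul_of_nonneg_left hsum
            have : 0 < K * C₁ * 2^q := mul_pos (mul_pos hK0 hC₁p) h2q
            positivity
    -- combine
    have hA0 : (0:ℝ) ≤ C₁ * 2^q := le_of_lt (mul_pos hC₁p h2q)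
    have harith : ∀ X Lx : ℝ, 0 ≤ X → Real.log 2 ≤ Lx →
        C₁ * 2^q * X + K * C₁ * 2^q * X * (1 + Lx)
          ≤ (C₁ * 2^q * (1/Real.log 2) + K * C₁ * 2^q * (1/Real.log 2 + 1)) * X * Lx := by
      intro X Lx hX hle
      have hr : 1 ≤ (1/Real.log 2) * Lx := by
        rw [one_div]
        calc (1:ℝ) = (Real.log 2)⁻¹ * Real.log 2 := by field_simp
          _ ≤ (Real.log 2)⁻¹ * Lx := mul_le_mul_of_nonneg_left hle (by positivity)
      have h1 : 0 ≤ C₁ * 2^q * X * ((1/Real.log 2) * Lx - 1) :=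
        mul_nonneg (mul_nonneg hA0 hX) (by linarith)
      have h2 : 0 ≤ K * (C₁ * 2^q * X * ((1/Real.log 2) * Lx - 1)) := mul_nonneg hK0.le h1
      nlinarith [h1, h2]
    exact le_trans key (le_trans (add_le_add t1 t3)
      (harith (x ^ (max (ω-P) 0)) (Real.log x) hX0 hlogx))
  · -- part (ii)
    intro C₀ hC₀
    have hC₀pos : (0:ℝ) < C₀ := by linarith
    have hB1 : (1:ℝ) ≤ 2*C₀ := by linarith
    have hB0 : (0:ℝ) < 2*C₀ := by linarith
    have hK2 : (0:ℝ) < (2*C₀) ^ |s| := Real.rpow_pos_of_pos hB0 _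
    have hK3 : (0:ℝ) < (2*C₀) ^ |s-1| := Real.rpow_pos_of_pos hB0 _
    have hC₁p : (0:ℝ) < C₁ := lt_of_lt_of_le one_pos hC₁1
    refine ⟨C₁*2^q*(2*C₀)^|s| + C₁*(2*C₀)^|s| + K*C₁*2^q*(2*C₀)^|s-1| + 1, ?_, ?_⟩
    · have t1 : 0 < C₁*2^q*(2*C₀)^|s| := mul_pos (mul_pos hC₁p h2q) hK2
      have t2 : 0 < C₁*(2*C₀)^|s| := mul_pos hC₁p hK2
      have t3 : 0 < K*C₁*2^q*(2*C₀)^|s-1| := mul_pos (mul_pos (mul_pos hK0 hC₁p) h2q) hK3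
      linarith
    intro α hα x hx
    set N : ℕ := ⌊x⌋₊ with hN_def
    set M : ℕ := ⌈x/C₀⌉₊ with hM_def
    have hxpos : (0:ℝ) < x := by linarith
    have hx1 : (1:ℝ) ≤ x := by linarith
    have hXe : (0:ℝ) ≤ x ^ (ω - P) := Real.rpow_nonneg hxpos.le _
    have hM1 : 1 ≤ M := Nat.ceil_pos.mpr (div_pos hxpos hC₀pos)
    rcases le_or_gt M N with hMN | hNM
    swap
    · -- empty interval
      have hempty : Finset.Icc M N = ∅ := Finset.Icc_eq_empty (by omega)
      unfold expSumI
      rw [← hM_def, ← hN_def, hempty]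
      simp only [Finset.sum_empty, mul_zero, sub_zero, map_zero, norm_zero]
      have t1 : 0 < C₁*2^q*(2*C₀)^|s| := mul_pos (mul_pos hC₁p h2q) hK2
      have t2 : 0 < C₁*(2*C₀)^|s| := mul_pos hC₁p hK2
      have t3 : 0 < K*C₁*2^q*(2*C₀)^|s-1| := mul_pos (mul_pos (mul_pos hK0 hC₁p) h2q) hK3
      have : (0:ℝ) ≤ (C₁*2^q*(2*C₀)^|s| + C₁*(2*C₀)^|s| + K*C₁*2^q*(2*C₀)^|s-1| + 1) := by linarith
      exact mul_nonneg this hXe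
    have hN2 : 2 ≤ N := Nat.le_floor (by exact_mod_cast hx)
    have hN1R : (1:ℝ) ≤ (N:ℝ) := by exact_mod_cast le_trans (by norm_num) hN2
    have hNpos : (0:ℝ) < (N:ℝ) := by linarith
    have hNx : (N:ℝ) ≤ x := Nat.floor_le (by linarith)
    have hMx : (M:ℝ) ≤ x := le_trans (by exact_mod_cast hMN) hNx
    have hM1R : (1:ℝ) ≤ (M:ℝ) := by exact_mod_cast hM1
    have hMlow : x/(2*C₀) ≤ (M:ℝ) := by
      have h1 : x/(2*C₀) ≤ x/C₀ := div_le_div_of_nonneg_left hxpos.le hC₀pos (by linarith)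
      exact le_trans h1 (Nat.le_ceil _)
    have hNlow : x/(2*C₀) ≤ (N:ℝ) := by
      have h1 : x/(2*C₀) ≤ x/2 := div_le_div_of_nonneg_left hxpos.le two_pos (by linarith)
      have h2 := Nat.sub_one_lt_floor x
      have h3 : x/2 ≤ x - 1 := by linarith
      rw [← hN_def] at h2
      linarith
    have hrw : expSumI (PPSpow c k) (fun n => (n:ℝ) ^ s * Real.log n) α (x/C₀) x
        - (1/(c:ℂ)) * expSumI (Ppow k) (fun n => (n:ℝ) ^ (ω - 1/k) * Real.log n) α (x/C₀) x
        = ∑ n ∈ Finset.Icc M N, (((n:ℝ)^s : ℝ):ℂ) * dd17 c k α n := by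
      unfold expSumI
      rw [← hM_def, ← hN_def, hs_def]
      exact target_eq17 c hcne k hk ω α M N hM1
    rw [hrw]
    have key := habel α M N hM1 hMN
    have hSq : ∀ i : ℕ, 1 ≤ i → Norm.norm (∑ n ∈ Finset.range (i+1), dd17 c k α n)
        ≤ C₁ * (2^q * (i:ℝ)^q) := by
      intro i hi1
      have hi1R : (1:ℝ) ≤ (i:ℝ) := by exact_mod_cast hi1
      refine le_trans (hD α hα (i+1)) ?_
      have h2 : ((i+1:ℕ):ℝ)^q ≤ 2^q * (i:ℝ)^q := by
        calc ((i+1:ℕ):ℝ)^q ≤ (2*(i:ℝ))^q :=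
              Real.rpow_le_rpow (by positivity) (by push_cast; linarith) hq
          _ = 2^q * (i:ℝ)^q := Real.mul_rpow (by norm_num) (by positivity)
      exact mul_le_mul_of_nonneg_left h2 hC₁0
    have hxq : ∀ i : ℕ, (i:ℝ) ≤ x → (i:ℝ)^q ≤ x^q :=
      fun i hi => Real.rpow_le_rpow (Nat.cast_nonneg i) hi hq
    have hxe : x^s * x^q = x^(ω-P) := by rw [← Real.rpow_add hxpos, hse]
    have t1 : (N:ℝ)^s * Norm.norm (∑ n ∈ Finset.range (N+1), dd17 c k α n)
        ≤ C₁*2^q*(2*C₀)^|s| * x^(ω-P) := by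
      have hNs : (N:ℝ)^s ≤ (2*C₀)^|s| * x^s := aux_base17 (2*C₀) x (N:ℝ) s hB1 hxpos hNlow hNx
      calc (N:ℝ)^s * Norm.norm (∑ n ∈ Finset.range (N+1), dd17 c k α n)
          ≤ ((2*C₀)^|s| * x^s) * (C₁ * (2^q * x^q)) := by
            apply mul_le_mul hNs
            · exact le_trans (hSq N (by omega))
                (mul_le_mul_of_nonneg_left (mul_le_mul_of_nonneg_left (hxq N hNx) h2q.le) hC₁0)
            · exact norm_nonneg _
            · positivity
        _ = C₁*2^q*(2*C₀)^|s| * (x^s * x^q) := by ring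
        _ = C₁*2^q*(2*C₀)^|s| * x^(ω-P) := by rw [hxe]
    have t2 : (M:ℝ)^s * Norm.norm (∑ n ∈ Finset.range M, dd17 c k α n)
        ≤ C₁*(2*C₀)^|s| * x^(ω-P) := by
      have hMs : (M:ℝ)^s ≤ (2*C₀)^|s| * x^s := aux_base17 (2*C₀) x (M:ℝ) s hB1 hxpos hMlow hMx
      have hSM : Norm.norm (∑ n ∈ Finset.range M, dd17 c k α n) ≤ C₁ * x^q :=
        le_trans (hD α hα M) (mul_le_mul_of_nonneg_left (hxq M hMx) hC₁0)
      calc (M:ℝ)^s * Norm.norm (∑ n ∈ Finset.range M, dd17 c k α n)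
          ≤ ((2*C₀)^|s| * x^s) * (C₁ * x^q) := by
            apply mul_le_mul hMs hSM (norm_nonneg _)
            positivity
        _ = C₁*(2*C₀)^|s| * (x^s * x^q) := by ring
        _ = C₁*(2*C₀)^|s| * x^(ω-P) := by rw [hxe]
    have t3 : ∑ i ∈ Finset.Ico M N, |((i:ℝ)+1)^s - (i:ℝ)^s|
          * Norm.norm (∑ n ∈ Finset.range (i+1), dd17 c k α n)
        ≤ K*C₁*2^q*(2*C₀)^|s-1| * x^(ω-P) := by
      have hterm : ∀ i ∈ Finset.Ico M N, |((i:ℝ)+1)^s - (i:ℝ)^s|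
            * Norm.norm (∑ n ∈ Finset.range (i+1), dd17 c k α n)
          ≤ K * ((2*C₀)^|s-1| * x^(s-1)) * (C₁ * (2^q * x^q)) := by
        intro i hi
        obtain ⟨hiM, hiN⟩ := Finset.mem_Ico.mp hi
        have hi1 : 1 ≤ i := le_trans hM1 hiM
        have hix : (i:ℝ) ≤ x := le_trans (by exact_mod_cast Nat.le_of_lt hiN) hNx
        have hilow : x/(2*C₀) ≤ (i:ℝ) := le_trans hMlow (by exact_mod_cast hiM)
        have his : (i:ℝ)^(s-1) ≤ (2*C₀)^|s-1| * x^(s-1) :=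
          aux_base17 (2*C₀) x (i:ℝ) (s-1) hB1 hxpos hilow hix
        have hstep := aux_step17 s i hi1
        have hSi := le_trans (hSq i hi1)
          (mul_le_mul_of_nonneg_left (mul_le_mul_of_nonneg_left (hxq i hix) h2q.le) hC₁0)
        calc |((i:ℝ)+1)^s - (i:ℝ)^s|
              * Norm.norm (∑ n ∈ Finset.range (i+1), dd17 c k α n)
            ≤ (K * (i:ℝ)^(s-1)) * (C₁ * (2^q * x^q)) := by
              rw [hK_def]
              refine mul_le_mul hstep hSi (norm_nonneg _) ?_
              rw [← hK_def]; positivity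
          _ ≤ (K * ((2*C₀)^|s-1| * x^(s-1))) * (C₁ * (2^q * x^q)) := by
              apply mul_le_mul_of_nonneg_right
                (mul_le_mul_of_nonneg_left his hK0.le)
              positivity
      calc ∑ i ∈ Finset.Ico M N, |((i:ℝ)+1)^s - (i:ℝ)^s|
            * Norm.norm (∑ n ∈ Finset.range (i+1), dd17 c k α n)
          ≤ ∑ _i ∈ Finset.Ico M N, K * ((2*C₀)^|s-1| * x^(s-1)) * (C₁ * (2^q * x^q)) :=
            Finset.sum_le_sum hterm
        _ = ((N - M : ℕ):ℝ) * (K * ((2*C₀)^|s-1| * x^(s-1)) * (C₁ * (2^q * x^q))) := by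
            rw [Finset.sum_const, Nat.card_Ico, nsmul_eq_mul]
        _ ≤ x * (K * ((2*C₀)^|s-1| * x^(s-1)) * (C₁ * (2^q * x^q))) := by
            apply mul_le_mul_of_nonneg_right
            · calc ((N - M : ℕ):ℝ) ≤ (N:ℝ) := by
                    exact_mod_cast Nat.sub_le N M
                _ ≤ x := hNx
            · positivity
        _ = K*C₁*2^q*(2*C₀)^|s-1| * (x * (x^(s-1) * x^q)) := by ring
        _ = K*C₁*2^q*(2*C₀)^|s-1| * x^(ω-P) := by
            congr 1
            rw [← Real.rpow_add hxpos,
              show ω - P = 1 + (s-1+q) by rw [← hse]; ring,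
              Real.rpow_add hxpos 1 (s-1+q), Real.rpow_one]
    refine le_trans key ?_
    have : (0:ℝ) ≤ x^(ω-P) := hXe
    linarith [t1, t2, t3]
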